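/- For an integer m ≥ 1 define the rational functions φ̃_m(T) = (m!/(T − T⁻¹)^{2m}) · Σ_{l=0}^{m} C(m,l)² T^{2l−m} and ψ̃_m(T) = (m!/(T − T⁻¹)^{2m}) · Σ_{l=0}^{m−1} C(m−1,l) C(m+1,l+1) T^{2l+1−m}, regarded as elements of the field ℚ(T) of rational functions over ℚ. Then for every integer k ≥ 1, the family of 2k rational functions {φ̃_1, …, φ̃_k, ψ̃_1, …, ψ̃_k} is linearly independent over ℚ. -/

import Mathlib

open Finset

/-- The rational function
`φ̃_m(T) = (m!/(T - T⁻¹)^(2m)) · ∑_{l=0}^{m} C(m,l)² T^(2l-m)` in `ℚ(T)`. -/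
noncomputable def phiTilde (m : ℕ) : RatFunc ℚ :=
  (m.factorial : RatFunc ℚ) / (RatFunc.X - RatFunc.X⁻¹) ^ (2 * m) *
    ∑ l ∈ Finset.range (m + 1),
      ((m.choose l : RatFunc ℚ)) ^ 2 * RatFunc.X ^ ((2 * l : ℤ) - m)

/-- The rational function
`ψ̃_m(T) = (m!/(T - T⁻¹)^(2m)) · ∑_{l=0}^{m-1} C(m-1,l) C(m+1,l+1) T^(2l+1-m)`
in `ℚ(T)`. -/
noncomputable def psiTilde (m : ℕ) : RatFunc ℚ :=
  (m.factorial : RatFunc ℚ) / (RatFunc.X - RatFunc.X⁻¹) ^ (2 * m) *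
    ∑ l ∈ Finset.range m,
      ((m - 1).choose l : RatFunc ℚ) * ((m + 1).choose (l + 1) : RatFunc ℚ) *
        RatFunc.X ^ ((2 * l : ℤ) + 1 - m)

open Polynomial

noncomputable def Pp (K m : ℕ) : ℚ[X] :=
  (m.factorial : ℚ[X]) * (X ^ 2 - 1) ^ (2 * (K - m)) *
    ∑ l ∈ Finset.range (m + 1), ((m.choose l : ℚ[X])) ^ 2 * X ^ (2 * l + m)

noncomputable def Qq (K m : ℕ) : ℚ[X] :=
  (m.factorial : ℚ[X]) * (X ^ 2 - 1) ^ (2 * (K - m)) *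
    ∑ l ∈ Finset.range m,
      ((m - 1).choose l : ℚ[X]) * ((m + 1).choose (l + 1) : ℚ[X]) * X ^ (2 * l + m + 1)

lemma hx0 : (RatFunc.X : RatFunc ℚ) ≠ 0 := RatFunc.X_ne_zero

lemma hu0 : (RatFunc.X ^ 2 - 1 : RatFunc ℚ) ≠ 0 := by
  have : ((X : ℚ[X]) ^ 2 - 1) ≠ 0 := by
    intro h
    have := congrArg (Polynomial.eval 0) h
    simp at this
  have h2 : algebraMap ℚ[X] (RatFunc ℚ) ((X : ℚ[X]) ^ 2 - 1) ≠ 0 := by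
    simpa using (map_ne_zero_iff _ (RatFunc.algebraMap_injective ℚ)).2 this
  simpa [map_pow, RatFunc.algebraMap_X] using h2

lemma hsub : (RatFunc.X - RatFunc.X⁻¹ : RatFunc ℚ) = (RatFunc.X ^ 2 - 1) / RatFunc.X := by
  rw [eq_div_iff hx0, sub_mul, inv_mul_cancel₀ hx0, sq]

lemma phi_mul (K m : ℕ) (hm : m ≤ K) :
    phiTilde m * algebraMap ℚ[X] (RatFunc ℚ) ((X ^ 2 - 1) ^ (2 * K)) =
      algebraMap ℚ[X] (RatFunc ℚ) (Pp K m) := by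
  have hS : (RatFunc.X : RatFunc ℚ) ^ (2 * m) *
      ∑ l ∈ Finset.range (m + 1),
        ((m.choose l : RatFunc ℚ)) ^ 2 * RatFunc.X ^ ((2 * l : ℤ) - m) =
      ∑ l ∈ Finset.range (m + 1),
        ((m.choose l : RatFunc ℚ)) ^ 2 * RatFunc.X ^ (2 * l + m) := by
    rw [Finset.mul_sum]
    refine Finset.sum_congr rfl fun l _ => ?_
    rw [mul_left_comm, ← zpow_natCast (RatFunc.X : RatFunc ℚ) (2 * m), ← zpow_add₀ hx0,
      show (((2 * m : ℕ) : ℤ) + ((2 * l : ℤ) - m)) = ((2 * l + m : ℕ) : ℤ) by push_cast; ring,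
      zpow_natCast]
  have hpow : (RatFunc.X ^ 2 - 1 : RatFunc ℚ) ^ (2 * K) =
      (RatFunc.X ^ 2 - 1) ^ (2 * m) * (RatFunc.X ^ 2 - 1) ^ (2 * (K - m)) := by
    rw [← pow_add]; congr 1; omega
  simp only [Pp, map_mul, map_pow, map_sub, map_one, map_sum, map_natCast, RatFunc.algebraMap_X]
  rw [← hS, phiTilde, hsub, hpow, div_pow, div_div_eq_mul_div, div_mul_eq_mul_div,
    div_mul_eq_mul_div, div_eq_iff (pow_ne_zero _ hu0)]
  ring

lemma psi_mul (K m : ℕ) (hm : m ≤ K) :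
    psiTilde m * algebraMap ℚ[X] (RatFunc ℚ) ((X ^ 2 - 1) ^ (2 * K)) =
      algebraMap ℚ[X] (RatFunc ℚ) (Qq K m) := by
  have hS : (RatFunc.X : RatFunc ℚ) ^ (2 * m) *
      ∑ l ∈ Finset.range m,
        ((m - 1).choose l : RatFunc ℚ) * ((m + 1).choose (l + 1) : RatFunc ℚ) *
          RatFunc.X ^ ((2 * l : ℤ) + 1 - m) =
      ∑ l ∈ Finset.range m,
        ((m - 1).choose l : RatFunc ℚ) * ((m + 1).choose (l + 1) : RatFunc ℚ) *
          RatFunc.X ^ (2 * l + m + 1) := by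
    rw [Finset.mul_sum]
    refine Finset.sum_congr rfl fun l _ => ?_
    rw [mul_left_comm, ← zpow_natCast (RatFunc.X : RatFunc ℚ) (2 * m), ← zpow_add₀ hx0,
      show (((2 * m : ℕ) : ℤ) + ((2 * l : ℤ) + 1 - m)) = ((2 * l + m + 1 : ℕ) : ℤ) by
        push_cast; ring,
      zpow_natCast]
  have hpow : (RatFunc.X ^ 2 - 1 : RatFunc ℚ) ^ (2 * K) =
      (RatFunc.X ^ 2 - 1) ^ (2 * m) * (RatFunc.X ^ 2 - 1) ^ (2 * (K - m)) := by
    rw [← pow_add]; congr 1; omega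
  simp only [Qq, map_mul, map_pow, map_sub, map_one, map_sum, map_natCast, RatFunc.algebraMap_X]
  rw [← hS, psiTilde, hsub, hpow, div_pow, div_div_eq_mul_div, div_mul_eq_mul_div,
    div_mul_eq_mul_div, div_eq_iff (pow_ne_zero _ hu0)]
  ring

noncomputable def cP (m : ℕ) : ℚ := (m.factorial : ℚ) * ∑ l ∈ Finset.range (m + 1), (m.choose l : ℚ) ^ 2

noncomputable def cQ (m : ℕ) : ℚ :=
  (m.factorial : ℚ) * ∑ l ∈ Finset.range m, ((m - 1).choose l : ℚ) * ((m + 1).choose (l + 1) : ℚ)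

lemma cP_pos (m : ℕ) : 0 < cP m := by
  have h1 : (0:ℚ) < ∑ l ∈ Finset.range (m + 1), (m.choose l : ℚ) ^ 2 :=
    Finset.sum_pos' (fun i _ => by positivity) ⟨0, by simp, by simp⟩
  have h2 : (0:ℚ) < m.factorial := by exact_mod_cast m.factorial_pos
  exact mul_pos h2 h1

lemma cQ_pos (m : ℕ) (hm : 1 ≤ m) : 0 < cQ m := by
  have h1 : (0:ℚ) < ∑ l ∈ Finset.range m, ((m - 1).choose l : ℚ) * ((m + 1).choose (l + 1) : ℚ) := by
    refine Finset.sum_pos' (fun i _ => by positivity) ⟨0, Finset.mem_range.2 (by omega), ?_⟩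
    simp
    positivity
  have h2 : (0:ℚ) < m.factorial := by exact_mod_cast m.factorial_pos
  exact mul_pos h2 h1

lemma Pp_eval_lt (K m : ℕ) (t : ℚ) (h : m < K) (ht : t ^ 2 = 1) : eval t (Pp K m) = 0 := by
  simp [Pp, ht, zero_pow (show 2 * (K - m) ≠ 0 by omega)]

lemma Qq_eval_lt (K m : ℕ) (t : ℚ) (h : m < K) (ht : t ^ 2 = 1) : eval t (Qq K m) = 0 := by
  simp [Qq, ht, zero_pow (show 2 * (K - m) ≠ 0 by omega)]

lemma Pp_eval_one (K : ℕ) : eval 1 (Pp K K) = cP K := by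
  simp [Pp, cP, Nat.sub_self, eval_finset_sum]

lemma Qq_eval_one (K : ℕ) : eval 1 (Qq K K) = cQ K := by
  simp [Qq, cQ, Nat.sub_self, eval_finset_sum]

lemma Pp_eval_neg_one (K : ℕ) : eval (-1) (Pp K K) = (-1) ^ K * cP K := by
  simp only [Pp, cP, Nat.sub_self, mul_zero, pow_zero, mul_one, eval_mul, eval_pow, eval_natCast,
    eval_finset_sum, eval_X, one_mul]
  rw [Finset.sum_congr rfl (fun l _ => by
    rw [pow_add, pow_mul, neg_one_sq, one_pow, one_mul] :
    ∀ l ∈ Finset.range (K+1), (K.choose l : ℚ) ^ 2 * (-1:ℚ) ^ (2 * l + K)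
      = (K.choose l : ℚ) ^ 2 * (-1) ^ K), ← Finset.sum_mul]
  ring

lemma Qq_eval_neg_one (K : ℕ) : eval (-1) (Qq K K) = (-1) ^ (K + 1) * cQ K := by
  simp only [Qq, cQ, Nat.sub_self, mul_zero, pow_zero, mul_one, eval_mul, eval_pow, eval_natCast,
    eval_finset_sum, eval_X, one_mul]
  rw [Finset.sum_congr rfl (fun l _ => by
    rw [show 2 * l + K + 1 = 2 * l + (K + 1) by ring, pow_add, pow_mul, neg_one_sq, one_pow,
      one_mul] :
    ∀ l ∈ Finset.range K, ((K - 1).choose l : ℚ) * ((K + 1).choose (l + 1) : ℚ)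
        * (-1:ℚ) ^ (2 * l + K + 1)
      = ((K - 1).choose l : ℚ) * ((K + 1).choose (l + 1) : ℚ) * (-1) ^ (K + 1)), ← Finset.sum_mul]
  ring

lemma key (K : ℕ) : ∀ a b : ℕ → ℚ,
    (∑ i ∈ Finset.range K, (a i • phiTilde (i + 1) + b i • psiTilde (i + 1))) = 0 →
    ∀ i < K, a i = 0 ∧ b i = 0 := by
  induction K with
  | zero => intro a b _ i hi; omega
  | succ K ih =>
    intro a b h i hi
    have hD := congrArg
      (fun z => z * algebraMap ℚ[X] (RatFunc ℚ) ((X ^ 2 - 1) ^ (2 * (K + 1)))) h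
    simp only [zero_mul, Finset.sum_mul] at hD
    have hterm : ∀ i ∈ Finset.range (K + 1),
        (a i • phiTilde (i + 1) + b i • psiTilde (i + 1)) *
            algebraMap ℚ[X] (RatFunc ℚ) ((X ^ 2 - 1) ^ (2 * (K + 1)))
          = algebraMap ℚ[X] (RatFunc ℚ)
              (Polynomial.C (a i) * Pp (K + 1) (i + 1) + Polynomial.C (b i) * Qq (K + 1) (i + 1)) := by
      intro i hi'
      have hle : i + 1 ≤ K + 1 := by have := Finset.mem_range.1 hi'; omega
      rw [add_mul, RatFunc.smul_eq_C_mul, RatFunc.smul_eq_C_mul, mul_assoc, mul_assoc,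
        phi_mul _ _ hle, psi_mul _ _ hle,
        map_add, map_mul, map_mul, RatFunc.algebraMap_C, RatFunc.algebraMap_C]
    rw [Finset.sum_congr rfl hterm, ← map_sum] at hD
    have hpoly := (map_eq_zero_iff _ (RatFunc.algebraMap_injective ℚ)).1 hD
    have hz : ∀ t : ℚ, t ^ 2 = 1 →
        (∑ i ∈ Finset.range K, eval t
          (Polynomial.C (a i) * Pp (K + 1) (i + 1) + Polynomial.C (b i) * Qq (K + 1) (i + 1))) = 0 := by
      intro t ht
      refine Finset.sum_eq_zero fun j hj => ?_
      have hlt : j + 1 < K + 1 := by have := Finset.mem_range.1 hj; omega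
      rw [eval_add, eval_mul, eval_mul, Pp_eval_lt _ _ _ hlt ht, Qq_eval_lt _ _ _ hlt ht]
      ring
    have e1 : a K * cP (K + 1) + b K * cQ (K + 1) = 0 := by
      have := congrArg (Polynomial.eval 1) hpoly
      rw [Finset.sum_range_succ, eval_add, eval_finset_sum, hz 1 (by norm_num), eval_add,
        eval_mul, eval_mul, eval_C, eval_C, Pp_eval_one, Qq_eval_one] at this
      simpa using this
    have e2 : a K * ((-1) ^ (K + 1) * cP (K + 1)) + b K * ((-1) ^ (K + 2) * cQ (K + 1)) = 0 := by
      have := congrArg (Polynomial.eval (-1)) hpoly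
      rw [Finset.sum_range_succ, eval_add, eval_finset_sum, hz (-1) (by norm_num), eval_add,
        eval_mul, eval_mul, eval_C, eval_C, Pp_eval_neg_one, Qq_eval_neg_one] at this
      simpa using this
    have e3 : a K * cP (K + 1) - b K * cQ (K + 1) = 0 := by
      have hne : ((-1 : ℚ)) ^ (K + 1) ≠ 0 := pow_ne_zero _ (by norm_num)
      apply mul_left_cancel₀ hne
      rw [mul_zero]
      linear_combination e2
    have hP := cP_pos (K + 1)
    have hQ := cQ_pos (K + 1) (by omega)
    have ha : a K = 0 := by
      have h4 : a K * cP (K + 1) = 0 := by linarith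
      rcases mul_eq_zero.1 h4 with h5 | h5
      · exact h5
      · exact absurd h5 (ne_of_gt hP)
    have hb : b K = 0 := by
      have h4 : b K * cQ (K + 1) = 0 := by linarith
      rcases mul_eq_zero.1 h4 with h5 | h5
      · exact h5
      · exact absurd h5 (ne_of_gt hQ)
    have h' : ∑ i ∈ Finset.range K, (a i • phiTilde (i + 1) + b i • psiTilde (i + 1)) = 0 := by
      rw [Finset.sum_range_succ, ha, hb] at h
      simpa [RatFunc.smul_eq_C_mul] using h
    rcases Nat.lt_succ_iff_lt_or_eq.1 hi with h5 | h5
    · exact ih a b h' i h5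
    · subst h5; exact ⟨ha, hb⟩

/-- For every integer `k ≥ 1`, the family of `2k` rational
functions `{φ̃_1, …, φ̃_k, ψ̃_1, …, ψ̃_k}` is linearly independent over `ℚ`. -/
theorem stmt8 (k : ℕ) (hk : 1 ≤ k) :
    LinearIndependent ℚ
      (Sum.elim (fun i : Fin k => phiTilde ((i : ℕ) + 1))
        (fun i : Fin k => psiTilde ((i : ℕ) + 1))) := by
  rw [Fintype.linearIndependent_iff]
  intro g hg
  set a : ℕ → ℚ := fun n => if h : n < k then g (Sum.inl ⟨n, h⟩) else 0 with ha
  set b : ℕ → ℚ := fun n => if h : n < k then g (Sum.inr ⟨n, h⟩) else 0 with hb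
  have hsum : ∑ i ∈ Finset.range k, (a i • phiTilde (i + 1) + b i • psiTilde (i + 1)) = 0 := by
    calc ∑ i ∈ Finset.range k, (a i • phiTilde (i + 1) + b i • psiTilde (i + 1))
        = ∑ i : Fin k, (g (Sum.inl i) • phiTilde ((i : ℕ) + 1)
            + g (Sum.inr i) • psiTilde ((i : ℕ) + 1)) := by
          rw [Finset.sum_range]
          exact Finset.sum_congr rfl fun i _ => by simp [ha, hb, i.isLt]
      _ = 0 := by
          rw [← hg, Fintype.sum_sum_type, Finset.sum_add_distrib]
          simp
          congr 1 <;> refine Finset.sum_congr rfl fun x _ => ?_ <;>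
            rw [RatFunc.smul_eq_C_mul, Algebra.smul_def, eq_ratCast RatFunc.C,
              eq_ratCast (algebraMap ℚ (RatFunc ℚ))]
  have hk0 := key k a b hsum
  intro i
  rcases i with j | j
  · have := (hk0 j j.isLt).1
    simpa [ha, j.isLt] using this
  · have := (hk0 j j.isLt).2
    simpa [hb, j.isLt] using this
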